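/- Suppose k ≥ 2 is even and set s = k/2. If a is even with 2 ≤ a ≤ r−2, then z^{(a)}_{s−1} = z^{(a)}_{s+1}. -/

import Mathlib

/-- Orthogonal coordinates `u_i(λ)` of `λ + ρ` for the weight
`λ = λ_1 ω_1 + ⋯ + λ_r ω_r` of `D_r` given in fundamental-weight coordinates. -/
noncomputable def uCoord (r : ℕ) (lam : ℕ → ℤ) (i : ℕ) : ℝ :=
  if i = r then ((lam r : ℝ) - (lam (r - 1) : ℝ)) / 2
  else (∑ j ∈ Finset.Icc i (r - 2), (lam j : ℝ))
      + ((lam (r - 1) : ℝ) + (lam r : ℝ)) / 2 + ((r : ℝ) - (i : ℝ))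

/-- The level-`k` quantum dimension of the weight `λ` of `D_r`
(`h = 2r - 2` is the Coxeter number), given by the product over the
positive roots `e_i - e_j`, `e_i + e_j` (`1 ≤ i < j ≤ r`). -/
noncomputable def qdimD (r k : ℕ) (lam : ℕ → ℤ) : ℝ :=
  ∏ p ∈ (Finset.Icc 1 r ×ˢ Finset.Icc 1 r).filter (fun p => p.1 < p.2),
    (Real.sin (Real.pi * (uCoord r lam p.1 - uCoord r lam p.2) / (2 * (r : ℝ) - 2 + (k : ℝ)))
      * Real.sin (Real.pi * (uCoord r lam p.1 + uCoord r lam p.2) / (2 * (r : ℝ) - 2 + (k : ℝ))))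
    / (Real.sin (Real.pi * ((p.2 : ℝ) - (p.1 : ℝ)) / (2 * (r : ℝ) - 2 + (k : ℝ)))
      * Real.sin (Real.pi * (2 * (r : ℝ) - (p.1 : ℝ) - (p.2 : ℝ)) / (2 * (r : ℝ) - 2 + (k : ℝ))))

def lamOf (n : ℕ) (c : Fin n → ℕ) : ℕ → ℤ :=
  fun j => ∑ i : Fin n, if j = 2 * (i : ℕ) + 2 then (c i : ℤ) else 0

lemma lam_hi (n : ℕ) (c : Fin n → ℕ) (j : ℕ) (hj : 2 * n + 1 ≤ j) : lamOf n c j = 0 := by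
  apply Finset.sum_eq_zero
  intro t _
  rw [if_neg]
  have := t.isLt
  omega

lemma sum_Icc_lam (r n : ℕ) (h2n : 2 * n + 2 ≤ r) (c : Fin n → ℕ) {i : ℕ} (hi : i ≤ 2) :
    ∑ j ∈ Finset.Icc i (r - 2), ((lamOf n c j : ℝ)) = ∑ t : Fin n, (c t : ℝ) := by
  simp only [lamOf]
  push_cast
  rw [Finset.sum_comm]
  refine Finset.sum_congr rfl fun t _ => ?_
  rw [Finset.sum_ite_eq' (Finset.Icc i (r-2)) (2 * (t:ℕ) + 2) (fun _ => (c t : ℝ)), if_pos]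
  have := t.isLt
  simp only [Finset.mem_Icc]
  omega

lemma uCoord_val (r n : ℕ) (hr : 4 ≤ r) (h2n : 2 * n + 2 ≤ r) (c : Fin n → ℕ)
    {i : ℕ} (hi1 : 1 ≤ i) (hi : i ≤ 2) :
    uCoord r (lamOf n c) i = (∑ t : Fin n, (c t : ℝ)) + ((r : ℝ) - (i : ℝ)) := by
  rw [uCoord, if_neg (by omega), sum_Icc_lam r n h2n c hi,
    lam_hi n c (r-1) (by omega), lam_hi n c r (by omega)]
  norm_num

lemma uCoord_three (r n : ℕ) (hr : 4 ≤ r) (hn : 1 ≤ n) (h2n : 2 * n + 2 ≤ r) (c : Fin n → ℕ)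
    (hc0 : c ⟨0, hn⟩ = 0) :
    uCoord r (lamOf n c) 3 = (∑ t : Fin n, (c t : ℝ)) + ((r : ℝ) - 3) := by
  rw [uCoord, if_neg (by omega), lam_hi n c (r-1) (by omega), lam_hi n c r (by omega)]
  have : ∑ j ∈ Finset.Icc 3 (r - 2), ((lamOf n c j : ℝ)) = ∑ t : Fin n, (c t : ℝ) := by
    simp only [lamOf]
    push_cast
    rw [Finset.sum_comm]
    refine Finset.sum_congr rfl fun t _ => ?_
    rw [Finset.sum_ite_eq' (Finset.Icc 3 (r-2)) (2 * (t:ℕ) + 2) (fun _ => (c t : ℝ))]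
    by_cases ht : t = ⟨0, hn⟩
    · subst ht
      rw [if_neg (by simp [Finset.mem_Icc]), hc0]
      norm_num
    · rw [if_pos]
      have := t.isLt
      have ht' : 1 ≤ (t : ℕ) := by
        rcases Nat.eq_zero_or_pos (t : ℕ) with h | h
        · exact absurd (Fin.ext h) ht
        · exact h
      simp only [Finset.mem_Icc]
      omega
  rw [this]
  norm_num

lemma sin_helper1 (N x : ℝ) (hN : N ≠ 0) :
    Real.sin (Real.pi * (N - x) / N) = Real.sin (Real.pi * x / N) := by
  have h : Real.pi * (N - x) / N = Real.pi - Real.pi * x / N := by field_simp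
  rw [h, Real.sin_pi_sub]

lemma sin_helper2 (N x : ℝ) (hN : N ≠ 0) :
    Real.sin (Real.pi * (2 * N - x) / N) = - Real.sin (Real.pi * x / N) := by
  have h : Real.pi * (2 * N - x) / N = 2 * Real.pi - Real.pi * x / N := by field_simp
  rw [h, Real.sin_sub, Real.sin_two_pi, Real.cos_two_pi]
  ring

def gSwap (p : ℕ × ℕ) : ℕ × ℕ :=
  if p.2 ≤ 2 then p else (if p.1 = 1 then 2 else if p.1 = 2 then 1 else p.1, p.2)

lemma prod_flip (r : ℕ) (hr : 4 ≤ r) (N : ℝ) (hN : N ≠ 0) (v v' : ℕ → ℝ)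
    (hv1 : v' 1 = N - v 2) (hv2 : v' 2 = N - v 1)
    (hvj : ∀ j, 3 ≤ j → j ≤ r → v' j = v j) :
    ∏ p ∈ (Finset.Icc 1 r ×ˢ Finset.Icc 1 r).filter (fun p => p.1 < p.2),
      (Real.sin (Real.pi * (v' p.1 - v' p.2) / N) * Real.sin (Real.pi * (v' p.1 + v' p.2) / N))
    = - ∏ p ∈ (Finset.Icc 1 r ×ˢ Finset.Icc 1 r).filter (fun p => p.1 < p.2),
      (Real.sin (Real.pi * (v p.1 - v p.2) / N) * Real.sin (Real.pi * (v p.1 + v p.2) / N)) := by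
  set S := (Finset.Icc 1 r ×ˢ Finset.Icc 1 r).filter (fun p => p.1 < p.2) with hS
  have hmemS : ∀ p : ℕ × ℕ, p ∈ S ↔ (1 ≤ p.1 ∧ p.1 ≤ r ∧ 1 ≤ p.2 ∧ p.2 ≤ r ∧ p.1 < p.2) := by
    intro p
    simp [hS, Finset.mem_filter, Finset.mem_product, Finset.mem_Icc, and_assoc]
  have mem12 : ((1, 2) : ℕ × ℕ) ∈ S := by rw [hmemS]; omega
  have hgmem : ∀ p ∈ S, gSwap p ∈ S := by
    intro p hp
    rw [hmemS] at hp ⊢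
    by_cases hc : p.2 ≤ 2
    · rw [gSwap, if_pos hc]; exact hp
    · rw [gSwap, if_neg hc]; dsimp; split_ifs <;> omega
  have hginv : ∀ p ∈ S, gSwap (gSwap p) = p := by
    intro p hp
    rw [hmemS] at hp
    by_cases hc : p.2 ≤ 2
    · rw [show gSwap p = p from by rw [gSwap, if_pos hc], gSwap, if_pos hc]
    · have hq : gSwap p = (if p.1 = 1 then 2 else if p.1 = 2 then 1 else p.1, p.2) := by
        rw [gSwap, if_neg hc]
      rw [hq, gSwap, if_neg (by dsimp; omega)]
      rw [Prod.ext_iff]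
      refine ⟨?_, rfl⟩
      dsimp
      split_ifs <;> omega
  have hterm : ∀ p ∈ S,
      Real.sin (Real.pi * (v' p.1 - v' p.2) / N) * Real.sin (Real.pi * (v' p.1 + v' p.2) / N)
      = (if gSwap p = (1, 2) then (-1 : ℝ) else 1) *
        (Real.sin (Real.pi * (v (gSwap p).1 - v (gSwap p).2) / N)
          * Real.sin (Real.pi * (v (gSwap p).1 + v (gSwap p).2) / N)) := by
    intro p hp
    rw [hmemS] at hp
    obtain ⟨h1, h2, h3, h4, h5⟩ := hp
    by_cases hc : p.2 ≤ 2
    · have hp1 : p.1 = 1 := by omega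
      have hp2 : p.2 = 2 := by omega
      have hg : gSwap p = p := by rw [gSwap, if_pos hc]
      rw [hg, hp1, hp2, if_pos (by rw [Prod.ext_iff]; exact ⟨hp1, hp2⟩), hv1, hv2]
      rw [show Real.pi * ((N - v 2) - (N - v 1)) / N = Real.pi * (v 1 - v 2) / N by ring,
        show Real.pi * ((N - v 2) + (N - v 1)) / N = Real.pi * (2 * N - (v 1 + v 2)) / N by ring,
        sin_helper2 N _ hN]
      ring
    · push_neg at hc
      have hv2' : v' p.2 = v p.2 := hvj _ hc h4
      by_cases ha : p.1 = 1
      · have hg : gSwap p = (2, p.2) := by rw [gSwap, if_neg (by omega), ha]; norm_num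
        rw [hg, if_neg (by simp [Prod.ext_iff]), ha, hv2', hv1]
        rw [show Real.pi * ((N - v 2) - v p.2) / N = Real.pi * (N - (v 2 + v p.2)) / N by ring,
          show Real.pi * ((N - v 2) + v p.2) / N = Real.pi * (N - (v 2 - v p.2)) / N by ring,
          sin_helper1 N _ hN, sin_helper1 N _ hN]
        ring
      · by_cases hb : p.1 = 2
        · have hg : gSwap p = (1, p.2) := by rw [gSwap, if_neg (by omega), hb]; norm_num
          rw [hg, if_neg (by simp [Prod.ext_iff]; omega), hb, hv2', hv2]
          rw [show Real.pi * ((N - v 1) - v p.2) / N = Real.pi * (N - (v 1 + v p.2)) / N by ring,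
            show Real.pi * ((N - v 1) + v p.2) / N = Real.pi * (N - (v 1 - v p.2)) / N by ring,
            sin_helper1 N _ hN, sin_helper1 N _ hN]
          ring
        · have hg : gSwap p = p := by
            unfold gSwap
            rw [if_neg (by omega), if_neg ha, if_neg hb]
          rw [hg, if_neg (by rw [Prod.ext_iff]; omega), hv2', hvj p.1 (by omega) h2]
          ring
  calc ∏ p ∈ S, (Real.sin (Real.pi * (v' p.1 - v' p.2) / N)
          * Real.sin (Real.pi * (v' p.1 + v' p.2) / N))
      = ∏ p ∈ S, (if p = (1, 2) then (-1 : ℝ) else 1) *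
          (Real.sin (Real.pi * (v p.1 - v p.2) / N) * Real.sin (Real.pi * (v p.1 + v p.2) / N)) :=
        Finset.prod_nbij' gSwap gSwap hgmem hgmem hginv hginv hterm
    _ = - ∏ p ∈ S, (Real.sin (Real.pi * (v p.1 - v p.2) / N)
          * Real.sin (Real.pi * (v p.1 + v p.2) / N)) := by
        rw [Finset.prod_mul_distrib, Finset.prod_ite_eq' S ((1, 2) : ℕ × ℕ) (fun _ => (-1 : ℝ)),
          if_pos mem12, neg_one_mul]

lemma lam_update (n : ℕ) (hn : 1 ≤ n) (c : Fin n → ℕ) (j : ℕ) :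
    lamOf n (Function.update c ⟨0, hn⟩ (c ⟨0, hn⟩ + 1)) j
      = lamOf n c j + (if j = 2 then 1 else 0) := by
  simp only [lamOf]
  have key : ∀ t : Fin n,
      (if j = 2 * (t : ℕ) + 2 then ((Function.update c ⟨0, hn⟩ (c ⟨0, hn⟩ + 1)) t : ℤ) else 0)
      = (if j = 2 * (t : ℕ) + 2 then (c t : ℤ) else 0)
        + (if t = ⟨0, hn⟩ then (if j = 2 then (1 : ℤ) else 0) else 0) := by
    intro t
    by_cases ht : t = ⟨0, hn⟩
    · subst ht
      have h2 : 2 * ((⟨0, hn⟩ : Fin n) : ℕ) + 2 = 2 := rfl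
      rw [h2, Function.update_self, if_pos rfl]
      by_cases hj : j = 2
      · subst hj
        simp only [if_pos rfl]
        push_cast
        ring
      · simp [hj]
    · rw [Function.update_of_ne ht, if_neg ht, add_zero]
  rw [Finset.sum_congr rfl (fun t _ => key t), Finset.sum_add_distrib,
    Finset.sum_ite_eq' Finset.univ (⟨0, hn⟩ : Fin n), if_pos (Finset.mem_univ _)]

lemma qdim_zero (r k n : ℕ) (hr : 4 ≤ r) (hn : 1 ≤ n) (h2n : 2 * n + 2 ≤ r) (c : Fin n → ℕ)
    (hc0 : c ⟨0, hn⟩ = 0) (hs : 2 * ∑ t, c t = k + 2) :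
    qdimD r k (lamOf n c) = 0 := by
  have hrR : (4 : ℝ) ≤ (r : ℝ) := by exact_mod_cast hr
  have hkR : (0 : ℝ) ≤ (k : ℝ) := Nat.cast_nonneg k
  have hN : (2 * (r : ℝ) - 2 + (k : ℝ)) ≠ 0 := by
    have : (0 : ℝ) < 2 * (r : ℝ) - 2 + (k : ℝ) := by linarith
    exact ne_of_gt this
  rw [qdimD]
  apply Finset.prod_eq_zero (i := ((1 : ℕ), (3 : ℕ)))
  · simp only [Finset.mem_filter, Finset.mem_product, Finset.mem_Icc]
    omega
  · have hSig : (k : ℝ) + 2 = 2 * ∑ t : Fin n, (c t : ℝ) := by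
      have := congrArg (Nat.cast : ℕ → ℝ) hs
      push_cast at this
      linarith
    have h13 : uCoord r (lamOf n c) 1 + uCoord r (lamOf n c) 3
        = 2 * (r : ℝ) - 2 + (k : ℝ) := by
      rw [uCoord_val r n hr h2n c (i := 1) le_rfl (by norm_num),
        uCoord_three r n hr hn h2n c hc0]
      push_cast
      linarith
    have harg : Real.pi * (2 * (r : ℝ) - 2 + (k : ℝ)) / (2 * (r : ℝ) - 2 + (k : ℝ))
        = Real.pi := by rw [mul_div_assoc, div_self hN, mul_one]
    rw [h13, harg, Real.sin_pi, mul_zero, zero_div]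

lemma qdim_flip (r k n : ℕ) (hr : 4 ≤ r) (hn : 1 ≤ n) (h2n : 2 * n + 2 ≤ r) (c : Fin n → ℕ)
    (hs : 2 * ∑ t, c t = k) :
    qdimD r k (lamOf n (Function.update c ⟨0, hn⟩ (c ⟨0, hn⟩ + 1))) = - qdimD r k (lamOf n c) := by
  have hrR : (4 : ℝ) ≤ (r : ℝ) := by exact_mod_cast hr
  have hkR : (0 : ℝ) ≤ (k : ℝ) := Nat.cast_nonneg k
  have hN : (2 * (r : ℝ) - 2 + (k : ℝ)) ≠ 0 := by
    have : (0 : ℝ) < 2 * (r : ℝ) - 2 + (k : ℝ) := by linarith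
    exact ne_of_gt this
  have hSig : (k : ℝ) = 2 * ∑ t : Fin n, (c t : ℝ) := by
    have := congrArg (Nat.cast : ℕ → ℝ) hs
    push_cast at this
    linarith
  set c' := Function.update c ⟨0, hn⟩ (c ⟨0, hn⟩ + 1) with hc'
  have hsumN : ∑ t : Fin n, c' t = (∑ t : Fin n, c t) + 1 := by
    rw [hc', Finset.sum_update_of_mem (Finset.mem_univ _)]
    rw [show (Finset.univ : Finset (Fin n)) \ {(⟨0, hn⟩ : Fin n)} = Finset.univ.erase ⟨0, hn⟩ from
      Finset.sdiff_singleton_eq_erase _ _]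
    conv_rhs => rw [← Finset.add_sum_erase _ c (Finset.mem_univ (⟨0, hn⟩ : Fin n))]
    omega
  have hsum' : ∑ t : Fin n, (c' t : ℝ) = (∑ t : Fin n, (c t : ℝ)) + 1 := by
    exact_mod_cast hsumN
  -- uCoord relations
  have hlam : ∀ j, lamOf n c' j = lamOf n c j + (if j = 2 then 1 else 0) :=
    fun j => lam_update n hn c j
  have hvj : ∀ j, 3 ≤ j → j ≤ r → uCoord r (lamOf n c') j = uCoord r (lamOf n c) j := by
    intro j h3 hjr
    by_cases hjr' : j = r
    · subst hjr'
      rw [uCoord, uCoord, if_pos rfl, if_pos rfl, hlam j, hlam (j - 1),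
        if_neg (by omega), if_neg (by omega), add_zero, add_zero]
    · rw [uCoord, uCoord, if_neg hjr', if_neg hjr',
        hlam (r - 1), hlam r, if_neg (by omega), if_neg (by omega), add_zero, add_zero]
      congr 1
      congr 1
      refine Finset.sum_congr rfl fun m hm => ?_
      rw [Finset.mem_Icc] at hm
      rw [hlam m, if_neg (by omega), add_zero]
  have hv1' : uCoord r (lamOf n c') 1
      = (2 * (r : ℝ) - 2 + (k : ℝ)) - uCoord r (lamOf n c) 2 := by
    rw [uCoord_val r n hr h2n c' (i := 1) le_rfl (by norm_num),
      uCoord_val r n hr h2n c (i := 2) (by norm_num) le_rfl, hsum']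
    push_cast
    linarith
  have hv2' : uCoord r (lamOf n c') 2
      = (2 * (r : ℝ) - 2 + (k : ℝ)) - uCoord r (lamOf n c) 1 := by
    rw [uCoord_val r n hr h2n c' (i := 2) (by norm_num) le_rfl,
      uCoord_val r n hr h2n c (i := 1) le_rfl (by norm_num), hsum']
    push_cast
    linarith
  rw [qdimD, qdimD, Finset.prod_div_distrib, Finset.prod_div_distrib, ← neg_div]
  congr 1
  exact prod_flip r hr _ hN (uCoord r (lamOf n c)) (uCoord r (lamOf n c')) hv1' hv2' hvj

lemma sum_combinatorial (n s : ℕ) (hn : 1 ≤ n) (hs : 1 ≤ s) (f : (Fin n → ℕ) → ℝ)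
    (hzero : ∀ c : Fin n → ℕ, c ⟨0, hn⟩ = 0 → (∑ t, c t) = s + 1 → f c = 0)
    (hflip : ∀ c : Fin n → ℕ, (∑ t, c t) = s →
      f (Function.update c ⟨0, hn⟩ (c ⟨0, hn⟩ + 1)) = - f c) :
    ∑ c ∈ (Fintype.piFinset (fun _ : Fin n => Finset.range (s - 1 + 1))).filter
        (fun c => ∑ i, c i ≤ s - 1), f c
    = ∑ c ∈ (Fintype.piFinset (fun _ : Fin n => Finset.range (s + 1 + 1))).filter
        (fun c => ∑ i, c i ≤ s + 1), f c := by
  classical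
  set i0 : Fin n := ⟨0, hn⟩ with hi0
  set B := Fintype.piFinset (fun _ : Fin n => Finset.range (s + 1 + 1)) with hB
  have hmemB : ∀ c : Fin n → ℕ, c ∈ B ↔ ∀ t, c t < s + 2 := by
    intro c
    simp [hB, Fintype.mem_piFinset, Finset.mem_range]
    exact forall_congr' fun t => Nat.lt_succ_iff.symm
  have hsingle : ∀ (c : Fin n → ℕ) (t : Fin n), c t ≤ ∑ i, c i :=
    fun c t => Finset.single_le_sum (fun i _ => Nat.zero_le (c i)) (Finset.mem_univ t)
  have hsum_up : ∀ (c : Fin n → ℕ) (b : ℕ),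
      (∑ t, Function.update c i0 b t) + c i0 = b + ∑ t, c t := by
    intro c b
    rw [Finset.sum_update_of_mem (Finset.mem_univ _),
      show (Finset.univ : Finset (Fin n)) \ {i0} = Finset.univ.erase i0 from
        Finset.sdiff_singleton_eq_erase _ _]
    conv_rhs => rw [← Finset.add_sum_erase _ c (Finset.mem_univ i0)]
    omega
  set T := B.filter (fun c => ∑ i, c i ≤ s + 1) with hT
  set U := T.filter (fun c => ¬ ∑ i, c i ≤ s - 1) with hU
  set V0 := (U.filter (fun c => ∑ i, c i = s + 1)).filter (fun c => c i0 = 0) with hV0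
  set V1 := (U.filter (fun c => ∑ i, c i = s + 1)).filter (fun c => ¬ c i0 = 0) with hV1
  set V2 := U.filter (fun c => ¬ ∑ i, c i = s + 1) with hV2
  have hmemV1 : ∀ c : Fin n → ℕ, c ∈ V1 ↔
      ((∀ t, c t < s + 2) ∧ (∑ i, c i = s + 1) ∧ c i0 ≠ 0) := by
    intro c
    simp only [hV1, hU, hT, Finset.mem_filter, hmemB c]
    constructor
    · rintro ⟨⟨⟨⟨h1, _⟩, _⟩, h4⟩, h5⟩
      exact ⟨h1, h4, h5⟩
    · rintro ⟨h1, h2, h3⟩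
      exact ⟨⟨⟨⟨h1, by omega⟩, by omega⟩, h2⟩, h3⟩
  have hmemV2 : ∀ c : Fin n → ℕ, c ∈ V2 ↔ ((∀ t, c t < s + 2) ∧ (∑ i, c i = s)) := by
    intro c
    simp only [hV2, hU, hT, Finset.mem_filter, hmemB c]
    constructor
    · rintro ⟨⟨⟨h1, h2⟩, h3⟩, h4⟩
      exact ⟨h1, by omega⟩
    · rintro ⟨h1, h2⟩
      exact ⟨⟨⟨h1, by omega⟩, by omega⟩, by omega⟩
  have hzeroV0 : ∑ c ∈ V0, f c = 0 := by
    apply Finset.sum_eq_zero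
    intro c hc
    simp only [hV0, hU, hT, Finset.mem_filter] at hc
    exact hzero c hc.2 hc.1.2
  have hflipsum : ∑ c ∈ V1, f c = - ∑ c ∈ V2, f c := by
    rw [← Finset.sum_neg_distrib]
    refine Finset.sum_nbij' (fun c => Function.update c i0 (c i0 - 1))
      (fun c => Function.update c i0 (c i0 + 1)) ?_ ?_ ?_ ?_ ?_
    · intro c hc
      rw [hmemV1] at hc
      obtain ⟨h1, h2, h3⟩ := hc
      rw [hmemV2]
      have hb := hsum_up c (c i0 - 1)
      constructor
      · intro t
        rcases eq_or_ne t i0 with h | h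
        · subst h; rw [Function.update_self]; have := h1 i0; omega
        · rw [Function.update_of_ne h]; exact h1 t
      · omega
    · intro c hc
      rw [hmemV2] at hc
      obtain ⟨h1, h2⟩ := hc
      rw [hmemV1]
      have hb := hsum_up c (c i0 + 1)
      have hle := hsingle c i0
      refine ⟨?_, by omega, ?_⟩
      · intro t
        rcases eq_or_ne t i0 with h | h
        · subst h; rw [Function.update_self]; have := h1 i0; omega
        · rw [Function.update_of_ne h]; exact h1 t
      · rw [Function.update_self]; omega
    · intro c hc
      rw [hmemV1] at hc
      rw [Function.update_idem, Function.update_self,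
        show c i0 - 1 + 1 = c i0 by omega, Function.update_eq_self]
    · intro c hc
      rw [Function.update_idem, Function.update_self,
        show c i0 + 1 - 1 = c i0 by omega, Function.update_eq_self]
    · intro c hc
      rw [hmemV1] at hc
      obtain ⟨h1, h2, h3⟩ := hc
      have hb := hsum_up c (c i0 - 1)
      have hd : ∑ t, Function.update c i0 (c i0 - 1) t = s := by omega
      have := hflip _ hd
      rw [Function.update_idem, Function.update_self,
        show c i0 - 1 + 1 = c i0 by omega, Function.update_eq_self] at this
      rw [this]
  have hUzero : ∑ c ∈ U, f c = 0 := by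
    rw [← Finset.sum_filter_add_sum_filter_not U (fun c => ∑ i, c i = s + 1) f,
      ← Finset.sum_filter_add_sum_filter_not (U.filter (fun c => ∑ i, c i = s + 1))
        (fun c => c i0 = 0) f]
    rw [← hV0, ← hV1, ← hV2, hzeroV0, hflipsum]
    ring
  have hTeq : T.filter (fun c => ∑ i, c i ≤ s - 1)
      = (Fintype.piFinset (fun _ : Fin n => Finset.range (s - 1 + 1))).filter
        (fun c => ∑ i, c i ≤ s - 1) := by
    ext c
    simp only [hT, Finset.mem_filter, hmemB c, Fintype.mem_piFinset, Finset.mem_range]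
    constructor
    · rintro ⟨⟨h1, h2⟩, h3⟩
      exact ⟨fun t => by have := hsingle c t; omega, h3⟩
    · rintro ⟨h1, h2⟩
      exact ⟨⟨fun t => by have := h1 t; omega, by omega⟩, h2⟩
  calc ∑ c ∈ (Fintype.piFinset (fun _ : Fin n => Finset.range (s - 1 + 1))).filter
        (fun c => ∑ i, c i ≤ s - 1), f c
      = ∑ c ∈ T.filter (fun c => ∑ i, c i ≤ s - 1), f c := by rw [hTeq]
    _ = ∑ c ∈ T.filter (fun c => ∑ i, c i ≤ s - 1), f c + ∑ c ∈ U, f c := by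
        rw [hUzero, add_zero]
    _ = ∑ c ∈ T, f c := by
        rw [hU]
        exact Finset.sum_filter_add_sum_filter_not T _ f

/-- The quantum dimension solution `z^{(a)}_m` of the `Q`-system of type `D_r`:
the specialization `Q^{(a)}_m(ρ/(h+k))` of the classical characters of the
Kirillov–Reshetikhin modules of type `D_r`. -/
noncomputable def zD (r k a m : ℕ) : ℝ :=
  if a = r - 1 ∨ a = r then
    qdimD r k (fun j => if j = a then (m : ℤ) else 0)
  else if a % 2 = 1 then
    ∑ c ∈ (Fintype.piFinset (fun _ : Fin ((a + 1) / 2) => Finset.range (m + 1))).filter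
        (fun c => ∑ i, c i = m),
      qdimD r k (fun j => ∑ i : Fin ((a + 1) / 2), if j = 2 * (i : ℕ) + 1 then (c i : ℤ) else 0)
  else
    ∑ c ∈ (Fintype.piFinset (fun _ : Fin (a / 2) => Finset.range (m + 1))).filter
        (fun c => ∑ i, c i ≤ m),
      qdimD r k (fun j => ∑ i : Fin (a / 2), if j = 2 * (i : ℕ) + 2 then (c i : ℤ) else 0)

/-- For even level `k ≥ 2` with `s = k/2` and even `a` with `2 ≤ a ≤ r-2`,
`z^{(a)}_{s-1} = z^{(a)}_{s+1}`. -/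
theorem stmt8 (r k : ℕ) (hr : 4 ≤ r) (hk : 2 ≤ k) (hkev : k % 2 = 0)
    (a : ℕ) (ha2 : 2 ≤ a) (har : a ≤ r - 2) (haev : a % 2 = 0) :
    zD r k a (k / 2 - 1) = zD r k a (k / 2 + 1) := by
  have hanr : ¬(a = r - 1 ∨ a = r) := by omega
  have hapar : ¬(a % 2 = 1) := by omega
  have hn : 1 ≤ a / 2 := by omega
  have h2n : 2 * (a / 2) + 2 ≤ r := by omega
  simp only [zD, if_neg hanr, if_neg hapar]
  exact sum_combinatorial (a / 2) (k / 2) hn (by omega)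
    (fun c => qdimD r k (lamOf (a / 2) c))
    (fun c hc0 hcs => qdim_zero r k (a / 2) hr hn h2n c hc0 (by omega))
    (fun c hcs => qdim_flip r k (a / 2) hr hn h2n c (by omega))
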